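/- Let O ∈ ℝ², let ℓ be a line with O ∉ ℓ, let θ ∈ ℝ be not an integer multiple of π, let ℓ' be the image of ℓ under rotation by θ about O, let P ∈ ℓ, and let P' be the image of P under rotation by θ about O. Let O_ℓ and O_{ℓ'} be the reflections of O across ℓ and across ℓ' (these are distinct points), and let d be the line through O_ℓ and O_{ℓ'}. Then the line through P and P' meets the parabola {X ∈ ℝ² : dist(X, O) = dist(X, d)} in exactly one point; that is, the line through P and P' is tangent to the parabola with focus O and directrix d. -/

import Mathlib

set_option maxHeartbeats 4000000


/- STATEMENT 3: Let ℓ be a line not through O, θ not an integer multiple of π, ℓ' the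
rotate of ℓ by θ about O, P ∈ ℓ and P' its rotate. Let O_ℓ, O_ℓ' be the reflections of
O across ℓ and ℓ', and d the line through them. Then the line PP' meets the parabola
{X : dist(X,O) = dist(X,d)} in exactly one point (it is tangent to the parabola with
focus O and directrix d). -/

open Real

noncomputable section

abbrev Pt := EuclideanSpace ℝ (Fin 2)

def pt (x y : ℝ) : Pt := (WithLp.equiv 2 _).symm ![x, y]

/-- The affine line through two points `A` and `B`. -/
def lineThrough (A B : Pt) : Set Pt := {P | ∃ t : ℝ, P = A + t • (B - A)}

/-- Counterclockwise rotation by angle `θ` about the point `c`. -/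
def rotAbout (θ : ℝ) (c p : Pt) : Pt :=
  pt (c 0 + Real.cos θ * (p 0 - c 0) - Real.sin θ * (p 1 - c 1))
     (c 1 + Real.sin θ * (p 0 - c 0) + Real.cos θ * (p 1 - c 1))

/-- Euclidean dot product of two vectors of ℝ². -/
def dot (u v : Pt) : ℝ := u 0 * v 0 + u 1 * v 1

/-- `X'` is the reflection of `X` across the line `m`. -/
def IsReflection (m : Set Pt) (X X' : Pt) : Prop :=
  midpoint ℝ X X' ∈ m ∧ ∀ A ∈ m, ∀ B ∈ m, dot (X' - X) (B - A) = 0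

lemma dist2 (U W : Pt) : dist U W = Real.sqrt ((U 0 - W 0)^2 + (U 1 - W 1)^2) := by
  rw [EuclideanSpace.dist_eq, Fin.sum_univ_two]; simp [Real.dist_eq, sq_abs]

lemma comp_line (C D : Pt) (k : ℝ) (i : Fin 2) : (C + k • (D - C)) i = C i + k * (D i - C i) := by
  simp

lemma sub2 (X Y : Pt) (i : Fin 2) : (X - Y) i = X i - Y i := by simp

lemma mid_apply (X Y : Pt) (i : Fin 2) : midpoint ℝ X Y i = (X i + Y i)/2 := by
  simp [midpoint_eq_smul_add]; ring

lemma pt0 (x y : ℝ) : pt x y 0 = x := rfl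
lemma pt1 (x y : ℝ) : pt x y 1 = y := rfl

lemma rot0 (θ : ℝ) (c p : Pt) :
    rotAbout θ c p 0 = c 0 + Real.cos θ * (p 0 - c 0) - Real.sin θ * (p 1 - c 1) := rfl
lemma rot1 (θ : ℝ) (c p : Pt) :
    rotAbout θ c p 1 = c 1 + Real.sin θ * (p 0 - c 0) + Real.cos θ * (p 1 - c 1) := rfl

lemma ext2 {X Y : Pt} (h0 : X 0 = Y 0) (h1 : X 1 = Y 1) : X = Y := by
  apply PiLp.ext; intro i; fin_cases i <;> assumption

lemma infDist_eq_foot (s : Set Pt) (x f : Pt) (hf : f ∈ s) (h : ∀ z ∈ s, dist x f ≤ dist x z) :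
    Metric.infDist x s = dist x f := by
  refine le_antisymm (Metric.infDist_le_dist_of_mem hf) ?_
  by_contra hc
  push_neg at hc
  obtain ⟨y, hy, hlt⟩ := (Metric.infDist_lt_iff ⟨f, hf⟩).1 hc
  exact absurd (h y hy) (by linarith)

lemma cond_iff (C D Y X : Pt)
    (he : 0 < (D 0 - C 0)^2 + (D 1 - C 1)^2) :
    (dist X Y = Metric.infDist X (lineThrough C D)) ↔
    ((X 0 - Y 0)^2 + (X 1 - Y 1)^2) * ((D 0 - C 0)^2 + (D 1 - C 1)^2)
      = ((X 0 - C 0)*(D 1 - C 1) - (X 1 - C 1)*(D 0 - C 0))^2 := by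
  have hE : (D 0 - C 0)^2 + (D 1 - C 1)^2 ≠ 0 := ne_of_gt he
  set k : ℝ := ((X 0 - C 0)*(D 0 - C 0) + (X 1 - C 1)*(D 1 - C 1)) /
      ((D 0 - C 0)^2 + (D 1 - C 1)^2) with hkdef
  have hk : k * ((D 0 - C 0)^2 + (D 1 - C 1)^2)
      = (X 0 - C 0)*(D 0 - C 0) + (X 1 - C 1)*(D 1 - C 1) := by
    rw [hkdef]; field_simp
  have hmin : ∀ z ∈ lineThrough C D, dist X (C + k • (D - C)) ≤ dist X z := by
    rintro z ⟨t, rfl⟩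
    rw [dist2, dist2]
    apply Real.sqrt_le_sqrt
    simp only [comp_line]
    have hid : ((X 0 - (C 0 + t*(D 0 - C 0)))^2 + (X 1 - (C 1 + t*(D 1 - C 1)))^2)
        - ((X 0 - (C 0 + k*(D 0 - C 0)))^2 + (X 1 - (C 1 + k*(D 1 - C 1)))^2)
        = (t-k)^2 * ((D 0 - C 0)^2 + (D 1 - C 1)^2) := by
      linear_combination (2*(t-k)) * hk
    nlinarith [mul_nonneg (sq_nonneg (t-k)) (le_of_lt he), hid]
  have hinf : Metric.infDist X (lineThrough C D) = dist X (C + k • (D - C)) :=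
    infDist_eq_foot _ _ _ ⟨k, rfl⟩ hmin
  rw [hinf, dist2, dist2, Real.sqrt_inj (by positivity) (by positivity)]
  have hkey : ((X 0 - (C + k • (D - C)) 0)^2 + (X 1 - (C + k • (D - C)) 1)^2)
      * ((D 0 - C 0)^2 + (D 1 - C 1)^2)
      = ((X 0 - C 0)*(D 1 - C 1) - (X 1 - C 1)*(D 0 - C 0))^2 := by
    simp only [comp_line]
    rw [hkdef]
    field_simp
    ring
  constructor
  · intro h
    calc ((X 0 - Y 0)^2 + (X 1 - Y 1)^2) * ((D 0 - C 0)^2 + (D 1 - C 1)^2)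
        = ((X 0 - (C + k • (D - C)) 0)^2 + (X 1 - (C + k • (D - C)) 1)^2)
          * ((D 0 - C 0)^2 + (D 1 - C 1)^2) := by rw [h]
      _ = _ := hkey
  · intro h
    exact mul_right_cancel₀ hE (h.trans hkey.symm)

theorem line_PP'_tangent_to_parabola
    (O A B : Pt) (hAB : A ≠ B) (hO : O ∉ lineThrough A B)
    (θ : ℝ) (hθ : ∀ n : ℤ, θ ≠ n * π)
    (P : Pt) (hP : P ∈ lineThrough A B)
    (Oℓ Oℓ' : Pt)
    (h1 : IsReflection (lineThrough A B) O Oℓ)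
    (h2 : IsReflection (rotAbout θ O '' lineThrough A B) O Oℓ') :
    ∃! X : Pt, X ∈ lineThrough P (rotAbout θ O P) ∧
      dist X O = Metric.infDist X (lineThrough Oℓ Oℓ') := by
  obtain ⟨cθ, hcdef⟩ : ∃ x, Real.cos θ = x := ⟨_, rfl⟩
  obtain ⟨sθ, hsdef⟩ : ∃ x, Real.sin θ = x := ⟨_, rfl⟩
  have hcs : cθ^2 + sθ^2 = 1 := by rw [← hcdef, ← hsdef]; exact cos_sq_add_sin_sq θ
  have hg : cθ^2 + sθ^2 - 1 = 0 := by rw [hcs]; ring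
  have hs0 : sθ ≠ 0 := by
    rw [← hsdef]
    intro h
    obtain ⟨n, hn⟩ := Real.sin_eq_zero_iff.1 h
    exact hθ n hn.symm
  have hc1 : cθ < 1 := by
    rcases lt_or_eq_of_le (hcdef ▸ Real.cos_le_one θ) with h | h
    · exact h
    · exfalso
      apply hs0
      have hsq : sθ^2 = 0 := by nlinarith
      exact (pow_eq_zero_iff two_ne_zero).1 hsq
  have hAmem : A ∈ lineThrough A B := ⟨0, by simp⟩
  have hBmem : B ∈ lineThrough A B := ⟨1, by simp [one_smul]⟩
  -- name the direction of ℓ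
  obtain ⟨u0, hu0def⟩ : ∃ x, B 0 - A 0 = x := ⟨_, rfl⟩
  obtain ⟨u1, hu1def⟩ : ∃ x, B 1 - A 1 = x := ⟨_, rfl⟩
  have hu2pos : 0 < u0^2 + u1^2 := by
    rcases eq_or_lt_of_le (by positivity : (0:ℝ) ≤ u0^2 + u1^2) with h | h
    · exfalso
      apply hAB
      have h0 : u0 = 0 := by nlinarith
      have h1 : u1 = 0 := by nlinarith
      exact ext2 (by rw [← sub_eq_zero]; rw [h0] at hu0def; linarith [hu0def])
        (by rw [← sub_eq_zero]; rw [h1] at hu1def; linarith [hu1def])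
    · exact h
  -- reflection across ℓ
  obtain ⟨⟨t₀, hmid1⟩, hperp1⟩ := h1
  have hm10 : (O 0 + Oℓ 0)/2 = A 0 + t₀ * u0 := by
    have h := congr_arg (fun z : Pt => z 0) hmid1
    simp only [comp_line, mid_apply] at h
    rw [hu0def] at h
    exact h
  have hm11 : (O 1 + Oℓ 1)/2 = A 1 + t₀ * u1 := by
    have h := congr_arg (fun z : Pt => z 1) hmid1
    simp only [comp_line, mid_apply] at h
    rw [hu1def] at h
    exact h
  obtain ⟨v0, hv0def⟩ : ∃ x, A 0 + t₀ * u0 - O 0 = x := ⟨_, rfl⟩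
  obtain ⟨v1, hv1def⟩ : ∃ x, A 1 + t₀ * u1 - O 1 = x := ⟨_, rfl⟩
  have hOl0 : Oℓ 0 = O 0 + 2*v0 := by linear_combination 2*hm10 + 2*hv0def
  have hOl1 : Oℓ 1 = O 1 + 2*v1 := by linear_combination 2*hm11 + 2*hv1def
  have hperp1s : (Oℓ 0 - O 0)*u0 + (Oℓ 1 - O 1)*u1 = 0 := by
    have h := hperp1 A hAmem B hBmem
    simp only [dot, sub2] at h
    rw [hu0def, hu1def] at h
    exact h
  have huv : v0*u0 + v1*u1 = 0 := by
    rw [hOl0, hOl1] at hperp1s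
    linear_combination hperp1s/2
  have hr2 : 0 < v0^2 + v1^2 := by
    rcases eq_or_lt_of_le (by positivity : (0:ℝ) ≤ v0^2 + v1^2) with h | h
    · exfalso
      apply hO
      have h0 : v0 = 0 := by nlinarith
      have h1 : v1 = 0 := by nlinarith
      refine ⟨t₀, ext2 ?_ ?_⟩
      · rw [comp_line]; rw [hu0def]; rw [h0] at hv0def; linarith [hv0def]
      · rw [comp_line]; rw [hu1def]; rw [h1] at hv1def; linarith [hv1def]
    · exact h
  have hr2ne : v0^2 + v1^2 ≠ 0 := ne_of_gt hr2
  -- reflection across rotated line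
  obtain ⟨⟨Q, ⟨t₁, hQ⟩, hQeq⟩, hperp2⟩ := h2
  have hQ0 : Q 0 = A 0 + t₁ * u0 := by
    have h := congr_arg (fun z : Pt => z 0) hQ
    simp only [comp_line] at h
    rw [hu0def] at h
    exact h
  have hQ1 : Q 1 = A 1 + t₁ * u1 := by
    have h := congr_arg (fun z : Pt => z 1) hQ
    simp only [comp_line] at h
    rw [hu1def] at h
    exact h
  have h20 : (O 0 + Oℓ' 0)/2 = O 0 + cθ*(Q 0 - O 0) - sθ*(Q 1 - O 1) := by
    have h := congr_arg (fun z : Pt => z 0) hQeq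
    simp only [rot0, mid_apply, hcdef, hsdef] at h
    exact h.symm
  have h21 : (O 1 + Oℓ' 1)/2 = O 1 + sθ*(Q 0 - O 0) + cθ*(Q 1 - O 1) := by
    have h := congr_arg (fun z : Pt => z 1) hQeq
    simp only [rot1, mid_apply, hcdef, hsdef] at h
    exact h.symm
  have hd0 : Oℓ' 0 - O 0 = 2*(cθ*(A 0 + t₁*u0 - O 0) - sθ*(A 1 + t₁*u1 - O 1)) := by
    linear_combination 2*h20 + 2*cθ*hQ0 - 2*sθ*hQ1
  have hd1 : Oℓ' 1 - O 1 = 2*(sθ*(A 0 + t₁*u0 - O 0) + cθ*(A 1 + t₁*u1 - O 1)) := by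
    linear_combination 2*h21 + 2*sθ*hQ0 + 2*cθ*hQ1
  have hrotd0 : rotAbout θ O B 0 - rotAbout θ O A 0 = cθ*u0 - sθ*u1 := by
    simp only [rot0, hcdef, hsdef]
    linear_combination cθ*hu0def - sθ*hu1def
  have hrotd1 : rotAbout θ O B 1 - rotAbout θ O A 1 = sθ*u0 + cθ*u1 := by
    simp only [rot1, hcdef, hsdef]
    linear_combination sθ*hu0def + cθ*hu1def
  have hperp2s : (Oℓ' 0 - O 0)*(cθ*u0 - sθ*u1) + (Oℓ' 1 - O 1)*(sθ*u0 + cθ*u1) = 0 := by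
    have h := hperp2 (rotAbout θ O A) ⟨A, hAmem, rfl⟩ (rotAbout θ O B) ⟨B, hBmem, rfl⟩
    simp only [dot, sub2] at h
    rw [hrotd0, hrotd1] at h
    exact h
  have hwu : (A 0 + t₁*u0 - O 0)*u0 + (A 1 + t₁*u1 - O 1)*u1 = 0 := by
    linear_combination hperp2s/2 - ((cθ*u0 - sθ*u1)/2)*hd0 - ((sθ*u0 + cθ*u1)/2)*hd1
      - ((A 0 + t₁*u0 - O 0)*u0 + (A 1 + t₁*u1 - O 1)*u1)*hg
  have ht₁ : t₁ = t₀ := by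
    have hz : (t₁ - t₀)*(u0^2 + u1^2) = 0 := by
      linear_combination hwu - huv - u0*hv0def - u1*hv1def
    rcases mul_eq_zero.1 hz with h | h
    · linarith
    · exfalso; linarith
  rw [ht₁] at hd0 hd1
  have hOl'0 : Oℓ' 0 = O 0 + 2*(cθ*v0 - sθ*v1) := by
    linear_combination hd0 + 2*cθ*hv0def - 2*sθ*hv1def
  have hOl'1 : Oℓ' 1 = O 1 + 2*(sθ*v0 + cθ*v1) := by
    linear_combination hd1 + 2*sθ*hv0def + 2*cθ*hv1def
  -- the point P
  obtain ⟨tp, hPeq⟩ := hP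
  have hp0raw : P 0 = A 0 + tp * u0 := by
    have h := congr_arg (fun z : Pt => z 0) hPeq
    simp only [comp_line] at h
    rw [hu0def] at h
    exact h
  have hp1raw : P 1 = A 1 + tp * u1 := by
    have h := congr_arg (fun z : Pt => z 1) hPeq
    simp only [comp_line] at h
    rw [hu1def] at h
    exact h
  obtain ⟨lam, hlam⟩ : ∃ x, (u1*v0 - u0*v1)/(v0^2+v1^2) = x := ⟨_, rfl⟩
  have hu0lam : u0 = -(lam*v1) := by
    rw [← hlam]
    field_simp
    linear_combination v0*huv
  have hu1lam : u1 = lam*v0 := by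
    rw [← hlam]
    field_simp
    linear_combination v1*huv
  obtain ⟨μ, hmu⟩ : ∃ x, lam*(tp - t₀) = x := ⟨_, rfl⟩
  have hP0 : P 0 = O 0 + (v0 - μ*v1) := by
    linear_combination hp0raw + hv0def + (tp - t₀)*hu0lam - v1*hmu
  have hP1 : P 1 = O 1 + (v1 + μ*v0) := by
    linear_combination hp1raw + hv1def + (tp - t₀)*hu1lam + v0*hmu
  have hR0 : rotAbout θ O P 0 = O 0 + (cθ*(v0 - μ*v1) - sθ*(v1 + μ*v0)) := by
    simp only [rot0, hcdef, hsdef]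
    rw [hP0, hP1]; ring
  have hR1 : rotAbout θ O P 1 = O 1 + (sθ*(v0 - μ*v1) + cθ*(v1 + μ*v0)) := by
    simp only [rot1, hcdef, hsdef]
    rw [hP0, hP1]; ring
  -- positivity of the directrix direction
  have he : 0 < (Oℓ' 0 - Oℓ 0)^2 + (Oℓ' 1 - Oℓ 1)^2 := by
    have hid : (Oℓ' 0 - Oℓ 0)^2 + (Oℓ' 1 - Oℓ 1)^2 = 4*(2 - 2*cθ)*(v0^2 + v1^2) := by
      rw [hOl0, hOl1, hOl'0, hOl'1]
      linear_combination (4*(v0^2 + v1^2))*hg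
    rw [hid]
    have : 0 < 2 - 2*cθ := by linarith
    positivity
  -- the main characterization
  have main : ∀ t : ℝ,
      (dist (P + t • (rotAbout θ O P - P)) O
        = Metric.infDist (P + t • (rotAbout θ O P - P)) (lineThrough Oℓ Oℓ'))
      ↔ 2*(1-cθ)*t - (1-cθ) - sθ*μ = 0 := by
    intro t
    rw [cond_iff Oℓ Oℓ' O _ he]
    simp only [comp_line, hP0, hP1, hR0, hR1, hOl0, hOl1, hOl'0, hOl'1]
    constructor
    · intro h
      have h4 : (2*(1-cθ)*t - (1-cθ) - sθ*μ)^2*(v0^2+v1^2)^2 = 0 := by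
        linear_combination h/4 - ((v0^2+v1^2)^2 * t * ((3 + sθ^2 - 4*cθ + cθ^2)*t - 2 - 2*sθ*μ + 2*cθ))*hg
      rcases mul_eq_zero.1 h4 with hL | hR
      · exact (pow_eq_zero_iff two_ne_zero).1 hL
      · exact absurd hR (pow_ne_zero 2 hr2ne)
    · intro h
      linear_combination (4*(v0^2+v1^2)^2*(2*(1-cθ)*t - (1-cθ) - sθ*μ))*h
        + (4*(v0^2+v1^2)^2 * t * ((3 + sθ^2 - 4*cθ + cθ^2)*t - 2 - 2*sθ*μ + 2*cθ))*hg
  -- conclusion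
  have h2c : (2:ℝ)*(1-cθ) ≠ 0 := by
    have : 0 < 2*(1-cθ) := by linarith
    exact ne_of_gt this
  obtain ⟨tstar, hts⟩ : ∃ x, ((1-cθ) + sθ*μ)/(2*(1-cθ)) = x := ⟨_, rfl⟩
  have htstar : 2*(1-cθ)*tstar - (1-cθ) - sθ*μ = 0 := by
    rw [← hts]
    field_simp
    rw [mul_div_cancel_left₀ _ (ne_of_gt (by linarith) : (1:ℝ) - cθ ≠ 0)]; ring
  refine ⟨P + tstar • (rotAbout θ O P - P), ⟨⟨tstar, rfl⟩, (main tstar).2 htstar⟩, ?_⟩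
  rintro X ⟨⟨t, rfl⟩, hcond⟩
  have hlin := (main t).1 hcond
  have hteq : t = tstar := by
    have h : 2*(1-cθ)*t = 2*(1-cθ)*tstar := by linarith
    exact mul_left_cancel₀ h2c h
  rw [hteq]
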